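/- Let A be an n-by-n reciprocal matrix with n ≥ 4, and let w be an efficient vector for A. Then there exist i, j ∈ {1,…,n} with i ≠ j such that w(i) is efficient for A(i) and w(j) is efficient for A(j); that is, w ∈ E(A;i) ∩ E(A;j). -/

import Mathlib

def PosVec {ι : Type*} (w : ι → ℝ) : Prop := ∀ i, 0 < w i

def IsReciprocal {ι : Type*} (A : Matrix ι ι ℝ) : Prop :=
  (∀ i j, 0 < A i j) ∧ ∀ i j, A j i = 1 / A i j

def IsEfficient {ι : Type*} (A : Matrix ι ι ℝ) (w : ι → ℝ) : Prop :=
  PosVec w ∧ ∀ v : ι → ℝ, PosVec v →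
    (∀ i j, |A i j - v i / v j| ≤ |A i j - w i / w j|) →
    ∃ c : ℝ, 0 < c ∧ v = c • w

/-- The principal submatrix `A(k)` of `A` obtained by deleting row and column `k`. -/
def delMat {n : ℕ} (A : Matrix (Fin n) (Fin n) ℝ) (k : Fin n) :
    Matrix {i : Fin n // i ≠ k} {i : Fin n // i ≠ k} ℝ :=
  Matrix.of fun a b => A a.1 b.1

/-- The vector `w(k)` obtained from `w` by deleting the `k`-th entry. -/
def delVec {n : ℕ} (w : Fin n → ℝ) (k : Fin n) : {i : Fin n // i ≠ k} → ℝ :=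
  fun a => w a.1

/-- `E(A)`, the set of efficient vectors for `A`. -/
def Eset {ι : Type*} (A : Matrix ι ι ℝ) : Set (ι → ℝ) := {w | IsEfficient A w}

/-- `E(A; i)`, the set of efficient vectors `w` for `A` such that `w(i)` is efficient
for `A(i)`. -/
def EsetSub {n : ℕ} (A : Matrix (Fin n) (Fin n) ℝ) (i : Fin n) : Set (Fin n → ℝ) :=
  {w | IsEfficient A w ∧ IsEfficient (delMat A i) (delVec w i)}

open Relation

section Comb
variable {ι : Type*}

def rIn (S : Set ι) (r : ι → ι → Prop) : ι → ι → Prop :=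
  fun a b => a ∈ S ∧ b ∈ S ∧ r a b

def StrongIn (S : Set ι) (r : ι → ι → Prop) : Prop :=
  ∀ a ∈ S, ∀ b ∈ S, ReflTransGen (rIn S r) a b

def Semi (r : ι → ι → Prop) : Prop := ∀ a b, r a b ∨ r b a

def Rset (T : Set ι) (r : ι → ι → Prop) : Set ι := {x | x ∉ T ∧ ∀ t ∈ T, ¬ r x t}
def Qset (T : Set ι) (r : ι → ι → Prop) : Set ι := {x | x ∉ T ∧ ∀ t ∈ T, ¬ r t x}

def Stuck (T : Set ι) (r : ι → ι → Prop) : Prop :=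
  ∀ x ∉ T, ¬ ((∃ t ∈ T, r t x) ∧ (∃ t ∈ T, r x t))

variable {T : Set ι} {r : ι → ι → Prop}

lemma rtg_mono {S S' : Set ι} (h : S ⊆ S') {a b : ι}
    (hab : ReflTransGen (rIn S r) a b) : ReflTransGen (rIn S' r) a b :=
  ReflTransGen.mono (r := rIn S r) (p := rIn S' r)
    (by rintro _ _ ⟨ha, hb, hr⟩; exact ⟨h ha, h hb, hr⟩) a b hab

lemma mem_R_or_Q (hstuck : Stuck T r) {x : ι} (hx : x ∉ T) :
    x ∈ Rset T r ∨ x ∈ Qset T r := by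
  have := hstuck x hx
  by_cases h1 : ∃ t ∈ T, r t x
  · left
    refine ⟨hx, fun t ht hrt => this ⟨h1, ⟨t, ht, hrt⟩⟩⟩
  · right
    push_neg at h1
    exact ⟨hx, h1⟩

lemma R_arc (hsemi : Semi r) {x t : ι} (hx : x ∈ Rset T r) (ht : t ∈ T) : r t x := by
  rcases hsemi t x with h | h
  · exact h
  · exact absurd h (hx.2 t ht)

lemma Q_arc (hsemi : Semi r) {x t : ι} (hx : x ∈ Qset T r) (ht : t ∈ T) : r x t := by
  rcases hsemi x t with h | h
  · exact h
  · exact absurd h (hx.2 t ht)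

lemma RQ_disjoint (hsemi : Semi r) (hne : T.Nonempty) {x : ι} :
    x ∈ Rset T r → x ∈ Qset T r → False := by
  intro hR hQ
  obtain ⟨t, ht⟩ := hne
  rcases hsemi x t with h | h
  · exact hR.2 t ht h
  · exact hQ.2 t ht h

lemma Q_nonempty (hsemi : Semi r) (hstrong : StrongIn Set.univ r)
    (hstuck : Stuck T r) (hne : T.Nonempty) (hproper : T ≠ Set.univ) :
    (Qset T r).Nonempty := by
  by_contra hQ
  rw [Set.not_nonempty_iff_eq_empty] at hQ
  obtain ⟨x, hx⟩ : Tᶜ.Nonempty := by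
    rwa [Set.nonempty_compl]
  obtain ⟨t, ht⟩ := hne
  have key : ∀ z, ReflTransGen (rIn Set.univ r) x z → z ∉ T := by
    intro z h
    induction h with
    | refl => exact hx
    | tail h1 h2 ih =>
      rename_i b c
      intro hc
      rcases mem_R_or_Q hstuck ih with hb | hb
      · exact hb.2 c hc h2.2.2
      · exact absurd hb (by simp [hQ])
  exact key t (hstrong x trivial t trivial) ht

lemma R_nonempty (hsemi : Semi r) (hstrong : StrongIn Set.univ r)
    (hstuck : Stuck T r) (hne : T.Nonempty) (hproper : T ≠ Set.univ) :
    (Rset T r).Nonempty := by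
  by_contra hR
  rw [Set.not_nonempty_iff_eq_empty] at hR
  obtain ⟨x, hx⟩ : Tᶜ.Nonempty := by rwa [Set.nonempty_compl]
  obtain ⟨t, ht⟩ := hne
  have key : ∀ z, ReflTransGen (rIn Set.univ r) t z → z ∈ T := by
    intro z h
    induction h with
    | refl => exact ht
    | tail h1 h2 ih =>
      rename_i b c
      by_contra hc
      rcases mem_R_or_Q hstuck hc with hcm | hcm
      · exact absurd hcm (by simp [hR])
      · exact hcm.2 b ih h2.2.2
  exact hx (key x (hstrong t trivial x trivial))

lemma cut_arc (hsemi : Semi r) (hstrong : StrongIn Set.univ r)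
    (hstuck : Stuck T r) (hne : T.Nonempty) (hproper : T ≠ Set.univ) :
    ∃ r0 ∈ Rset T r, ∃ q0 ∈ Qset T r, r r0 q0 := by
  by_contra h
  push_neg at h
  obtain ⟨q, hq⟩ := Q_nonempty hsemi hstrong hstuck hne hproper
  obtain ⟨t, ht⟩ := hne
  have key : ∀ z, ReflTransGen (rIn Set.univ r) t z → z ∈ T ∪ Rset T r := by
    intro z hz
    induction hz with
    | refl => exact Or.inl ht
    | tail h1 h2 ih =>
      rename_i b c
      by_cases hc : c ∈ T
      · exact Or.inl hc
      rcases mem_R_or_Q hstuck hc with hcm | hcm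
      · exact Or.inr hcm
      · rcases ih with hb | hb
        · exact absurd h2.2.2 (hcm.2 b hb)
        · exact absurd h2.2.2 (h b hb c hcm)
  rcases key q (hstrong t trivial q trivial) with h' | h'
  · exact hq.1 h'
  · exact RQ_disjoint hsemi ⟨t, ht⟩ h' hq

lemma reach_Q (hsemi : Semi r) (hstrong : StrongIn Set.univ r)
    (hstuck : Stuck T r) (hne : T.Nonempty) :
    ∀ q ∈ Qset T r, ∃ r0 ∈ Rset T r,
      ReflTransGen (rIn (Rset T r ∪ Qset T r) r) r0 q := by
  intro q hq
  obtain ⟨t, ht⟩ := hne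
  have key : ∀ z, ReflTransGen (rIn Set.univ r) t z →
      z ∈ T ∨ (∃ r0 ∈ Rset T r, ReflTransGen (rIn (Rset T r ∪ Qset T r) r) r0 z) := by
    intro z hz
    induction hz with
    | refl => exact Or.inl ht
    | tail h1 h2 ih =>
      rename_i b c
      by_cases hc : c ∈ T
      · exact Or.inl hc
      rcases mem_R_or_Q hstuck hc with hcm | hcm
      · exact Or.inr ⟨c, hcm, ReflTransGen.refl⟩
      · rcases ih with hb | ⟨r0, hr0, hpath⟩
        · exact absurd h2.2.2 (hcm.2 b hb)
        · -- b is in R ∪ Q? we need b ∈ R∪Q to extend; get from path end? path ends at b.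
          have hbRQ : b ∈ Rset T r ∪ Qset T r := by
            rcases (ReflTransGen.cases_tail hpath) with heq | ⟨d, _, hstep⟩
            · exact Or.inl (heq ▸ hr0)
            · exact hstep.2.1
          exact Or.inr ⟨r0, hr0, hpath.tail ⟨hbRQ, Or.inr hcm, h2.2.2⟩⟩
  rcases key q (hstrong t trivial q trivial) with h' | h'
  · exact absurd h' hq.1
  · exact h'

lemma reach_from_R (hsemi : Semi r) (hstrong : StrongIn Set.univ r)
    (hstuck : Stuck T r) (hne : T.Nonempty) :
    ∀ r0 ∈ Rset T r, ∃ q ∈ Qset T r,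
      ReflTransGen (rIn (Rset T r ∪ Qset T r) r) r0 q := by
  intro r0 hr0
  obtain ⟨t, ht⟩ := hne
  have key : ∀ z, ReflTransGen (rIn Set.univ r) r0 z →
      (∃ q ∈ Qset T r, ReflTransGen (rIn (Rset T r ∪ Qset T r) r) r0 q) ∨
      (z ∈ Rset T r ∧ ReflTransGen (rIn (Rset T r ∪ Qset T r) r) r0 z) := by
    intro z hz
    induction hz with
    | refl => exact Or.inr ⟨hr0, ReflTransGen.refl⟩
    | tail h1 h2 ih =>
      rename_i b c
      rcases ih with h' | ⟨hbR, hpath⟩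
      · exact Or.inl h'
      by_cases hc : c ∈ T
      · exact absurd h2.2.2 (hbR.2 c hc)
      rcases mem_R_or_Q hstuck hc with hcm | hcm
      · exact Or.inr ⟨hcm, hpath.tail ⟨Or.inl hbR, Or.inl hcm, h2.2.2⟩⟩
      · exact Or.inl ⟨c, hcm, hpath.tail ⟨Or.inl hbR, Or.inr hcm, h2.2.2⟩⟩
  rcases key t (hstrong r0 trivial t trivial) with h' | ⟨htR, _⟩
  · exact h'
  · exact absurd ht htR.1

lemma grow {S : Set ι} (hS : StrongIn S r) {x : ι}
    (t t' : ι) (ht : t ∈ S) (ht' : t' ∈ S) (hin : r t x) (hout : r x t') :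
    StrongIn (insert x S) r := by
  have hsub : S ⊆ insert x S := Set.subset_insert x S
  have hxmem : x ∈ insert x S := Set.mem_insert x S
  have hax : ∀ a ∈ S, ReflTransGen (rIn (insert x S) r) a x := fun a ha =>
    ReflTransGen.tail (rtg_mono hsub (hS a ha t ht)) ⟨hsub ht, hxmem, hin⟩
  have hxb : ∀ b ∈ S, ReflTransGen (rIn (insert x S) r) x b := fun b hb =>
    ReflTransGen.head ⟨hxmem, hsub ht', hout⟩ (rtg_mono hsub (hS t' ht' b hb))
  intro a ha b hb
  rcases ha with rfl | ha
  · rcases hb with rfl | hb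
    · exact ReflTransGen.refl
    · exact hxb b hb
  · rcases hb with rfl | hb
    · exact hax a ha
    · exact rtg_mono hsub (hS a ha b hb)

lemma stuck_two (hsemi : Semi r) (hstrong : StrongIn Set.univ r)
    (hstuck : Stuck T r) (hproper : T ≠ Set.univ)
    (h2 : ∃ a ∈ T, ∃ b ∈ T, a ≠ b) :
    ∀ t0 ∈ T, StrongIn ({t0}ᶜ) r := by
  intro t0 ht0
  obtain ⟨a, ha, b, hb, hab⟩ := h2
  have hne : T.Nonempty := ⟨a, ha⟩
  -- a vertex of T different from t0
  obtain ⟨t1, ht1, ht1ne⟩ : ∃ t1 ∈ T, t1 ≠ t0 := by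
    by_cases h : a = t0
    · exact ⟨b, hb, fun hh => hab (h ▸ hh ▸ rfl)⟩
    · exact ⟨a, ha, h⟩
  set C : Set ι := {t0}ᶜ with hC
  have hRC : Rset T r ⊆ C := fun x hx hx0 => hx.1 (by rwa [Set.mem_singleton_iff.mp hx0])
  have hQC : Qset T r ⊆ C := fun x hx hx0 => hx.1 (by rwa [Set.mem_singleton_iff.mp hx0])
  have hRQC : Rset T r ∪ Qset T r ⊆ C := Set.union_subset hRC hQC
  have hTC : ∀ t ∈ T, t ≠ t0 → t ∈ C := fun t _ h => h
  obtain ⟨r0, hr0, q0, hq0, harc⟩ := cut_arc hsemi hstrong hstuck hne hproper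
  -- from a T-vertex (≠ t0) to anything
  have htq : ∀ t ∈ T, t ≠ t0 → ∀ q ∈ Qset T r, ReflTransGen (rIn C r) t q := by
    intro t ht htne q hq
    obtain ⟨r1, hr1, hpath⟩ := reach_Q hsemi hstrong hstuck hne q hq
    exact ReflTransGen.head ⟨hTC t ht htne, hRC hr1, R_arc hsemi hr1 ht⟩
      (rtg_mono hRQC hpath)
  have htr : ∀ t ∈ T, t ≠ t0 → ∀ x ∈ Rset T r, ReflTransGen (rIn C r) t x := by
    intro t ht htne x hx
    exact ReflTransGen.single ⟨hTC t ht htne, hRC hx, R_arc hsemi hx ht⟩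
  have htt : ∀ t ∈ T, t ≠ t0 → ∀ t' ∈ T, t' ≠ t0 → ReflTransGen (rIn C r) t t' := by
    intro t ht htne t' ht' ht'ne
    refine ReflTransGen.head ⟨hTC t ht htne, hRC hr0, R_arc hsemi hr0 ht⟩ ?_
    refine ReflTransGen.head ⟨hRC hr0, hQC hq0, harc⟩ ?_
    exact ReflTransGen.single ⟨hQC hq0, hTC t' ht' ht'ne, Q_arc hsemi hq0 ht'⟩
  have hfromT : ∀ t ∈ T, t ≠ t0 → ∀ b ∈ C, ReflTransGen (rIn C r) t b := by
    intro t ht htne b hbC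
    by_cases hbT : b ∈ T
    · exact htt t ht htne b hbT hbC
    · rcases mem_R_or_Q hstuck hbT with hbm | hbm
      · exact htr t ht htne b hbm
      · exact htq t ht htne b hbm
  have hfromQ : ∀ q ∈ Qset T r, ∀ b ∈ C, ReflTransGen (rIn C r) q b := by
    intro q hq b hbC
    exact ReflTransGen.head ⟨hQC hq, hTC t1 ht1 ht1ne, Q_arc hsemi hq ht1⟩
      (hfromT t1 ht1 ht1ne b hbC)
  intro x hx y hy
  by_cases hxT : x ∈ T
  · exact hfromT x hxT hx y hy
  · rcases mem_R_or_Q hstuck hxT with hxm | hxm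
    · obtain ⟨q, hq, hpath⟩ := reach_from_R hsemi hstrong hstuck hne x hxm
      exact ReflTransGen.trans (rtg_mono hRQC hpath) (hfromQ q hq y hy)
    · exact hfromQ x hxm y hy

lemma singleton_stuck (hsemi : Semi r) (hstrong : StrongIn Set.univ r)
    {v : ι} (hstuck : Stuck {v} r) (hproper : ({v} : Set ι) ≠ Set.univ) :
    ∃ r0 q0 : ι, r0 ∉ ({v} : Set ι) ∧ q0 ∉ ({v} : Set ι) ∧ r0 ≠ q0 ∧
      StrongIn ({v, r0, q0} : Set ι) r := by
  have hne : ({v} : Set ι).Nonempty := ⟨v, rfl⟩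
  obtain ⟨r0, hr0, q0, hq0, harc⟩ := cut_arc hsemi hstrong hstuck hne hproper
  have hvr : r v r0 := R_arc hsemi hr0 rfl
  have hqv : r q0 v := Q_arc hsemi hq0 rfl
  refine ⟨r0, q0, hr0.1, hq0.1, fun h => RQ_disjoint hsemi hne (h ▸ hr0) hq0, ?_⟩
  set S : Set ι := {v, r0, q0} with hS
  have hvS : v ∈ S := Or.inl rfl
  have hrS : r0 ∈ S := Or.inr (Or.inl rfl)
  have hqS : q0 ∈ S := Or.inr (Or.inr rfl)
  have e1 : ReflTransGen (rIn S r) v r0 := ReflTransGen.single ⟨hvS, hrS, hvr⟩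
  have e2 : ReflTransGen (rIn S r) r0 q0 := ReflTransGen.single ⟨hrS, hqS, harc⟩
  have e3 : ReflTransGen (rIn S r) q0 v := ReflTransGen.single ⟨hqS, hvS, hqv⟩
  intro a ha b hb
  rcases ha with rfl | rfl | rfl <;> rcases hb with rfl | rfl | rfl
  · exact ReflTransGen.refl
  · exact e1
  · exact e1.trans e2
  · exact e2.trans e3
  · exact ReflTransGen.refl
  · exact e2
  · exact e3
  · exact e3.trans e1
  · exact ReflTransGen.refl


lemma reach_top [Fintype ι] (hsemi : Semi r) (hstrong : StrongIn Set.univ r)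
    (hcard : 4 ≤ Fintype.card ι) :
    ∀ k (T : Set ι), Tᶜ.ncard ≤ k → StrongIn T r → T.Nonempty → T ≠ Set.univ →
      (∃ i j : ι, i ≠ j ∧ StrongIn ({i}ᶜ) r ∧ StrongIn ({j}ᶜ) r) ∨
      (∃ y, y ∉ T ∧ StrongIn ({y}ᶜ) r) := by
  intro k
  induction k with
  | zero =>
    intro T hk _ _ hproper
    exfalso
    have h1 : Tᶜ.Nonempty := Set.nonempty_compl.mpr hproper
    have := Set.ncard_pos (Set.toFinite Tᶜ) |>.mpr h1
    omega
  | succ k ih =>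
    intro T hk hT hne hproper
    by_cases h1 : Tᶜ.ncard = 1
    · obtain ⟨y, hy⟩ := Set.ncard_eq_one.mp h1
      right
      refine ⟨y, ?_, ?_⟩
      · have : y ∈ Tᶜ := hy ▸ rfl
        exact this
      · have : ({y}ᶜ : Set ι) = T := by rw [← hy, compl_compl]
        rwa [this]
    · by_cases hun : ∃ x ∉ T, (∃ t ∈ T, r t x) ∧ (∃ t ∈ T, r x t)
      · obtain ⟨x, hx, ⟨t, ht, hin⟩, ⟨t', ht', hout⟩⟩ := hun
        have hS : StrongIn (insert x T) r := grow hT t t' ht ht' hin hout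
        have hcompl : (insert x T)ᶜ = Tᶜ \ {x} := by
          rw [Set.compl_eq_univ_diff, Set.compl_eq_univ_diff]
          ext z
          simp [Set.mem_insert_iff]
          tauto
        have hxc : x ∈ Tᶜ := hx
        have hmeas : (insert x T)ᶜ.ncard ≤ k := by
          rw [hcompl]
          have := Set.ncard_diff_singleton_add_one hxc (Set.toFinite Tᶜ)
          omega
        have hproper' : insert x T ≠ Set.univ := by
          intro h
          have h2 : (insert x T)ᶜ.ncard = 0 := by rw [h]; simp
          rw [hcompl] at h2
          have := Set.ncard_diff_singleton_add_one hxc (Set.toFinite Tᶜ)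
          have h4 : 0 < Tᶜ.ncard := Set.ncard_pos (Set.toFinite Tᶜ) |>.mpr
            (Set.nonempty_compl.mpr hproper)
          omega
        rcases ih (insert x T) hmeas hS ⟨x, Set.mem_insert x T⟩ hproper' with h | ⟨y, hy, hys⟩
        · exact Or.inl h
        · exact Or.inr ⟨y, fun hyT => hy (Set.subset_insert x T hyT), hys⟩
      · have hstuck : Stuck T r := fun x hx h => hun ⟨x, hx, h⟩
        by_cases h2 : ∃ a ∈ T, ∃ b ∈ T, a ≠ b
        · obtain ⟨a, ha, b, hb, hab⟩ := h2
          exact Or.inl ⟨a, b, hab,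
            stuck_two hsemi hstrong hstuck hproper ⟨a, ha, b, hb, hab⟩ a ha,
            stuck_two hsemi hstrong hstuck hproper ⟨a, ha, b, hb, hab⟩ b hb⟩
        · -- T is a singleton {v}
          obtain ⟨v, hv⟩ := hne
          have hTv : T = {v} := by
            ext z
            constructor
            · intro hz
              by_contra hzv
              exact h2 ⟨z, hz, v, hv, hzv⟩
            · intro hz
              rwa [Set.mem_singleton_iff.mp hz]
          subst hTv
          obtain ⟨r0, q0, hr0, hq0, hrq, hS⟩ :=
            singleton_stuck hsemi hstrong hstuck hproper
          set S : Set ι := {v, r0, q0} with hSdef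
          have hSsub : ({v} : Set ι) ⊆ S := by
            intro z hz
            exact Or.inl (Set.mem_singleton_iff.mp hz)
          have hScompl : Sᶜ ⊂ ({v} : Set ι)ᶜ := by
            constructor
            · exact Set.compl_subset_compl.mpr hSsub
            · intro hsub
              have : r0 ∈ Sᶜ := hsub (fun h => hr0 h)
              exact this (Or.inr (Or.inl rfl))
          have hmeas : Sᶜ.ncard ≤ k := by
            have := Set.ncard_lt_ncard hScompl (Set.toFinite _)
            omega
          have hSproper : S ≠ Set.univ := by
            intro h
            have h3 : S.ncard ≤ 3 := by
              calc S.ncard ≤ ({r0, q0} : Set ι).ncard + 1 := Set.ncard_insert_le _ _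
                _ ≤ (({q0} : Set ι).ncard + 1) + 1 :=
                    Nat.add_le_add_right (Set.ncard_insert_le _ _) 1
                _ = 3 := by rw [Set.ncard_singleton]
            rw [h, Set.ncard_univ, Nat.card_eq_fintype_card] at h3
            omega
          rcases ih S hmeas hS ⟨v, Or.inl rfl⟩ hSproper with h | ⟨y, hy, hys⟩
          · exact Or.inl h
          · exact Or.inr ⟨y, fun hyT => hy (hSsub hyT), hys⟩

theorem two_omittable [Fintype ι] (hsemi : Semi r) (hstrong : StrongIn Set.univ r)
    (hcard : 4 ≤ Fintype.card ι) :
    ∃ i j : ι, i ≠ j ∧ StrongIn ({i}ᶜ) r ∧ StrongIn ({j}ᶜ) r := by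
  have hpos : 0 < Fintype.card ι := by omega
  have hnem : Nonempty ι := Fintype.card_pos_iff.mp hpos
  obtain ⟨v0⟩ := hnem
  have hsingle_strong : ∀ v : ι, StrongIn ({v} : Set ι) r := by
    intro v a ha b hb
    rw [Set.mem_singleton_iff.mp ha, Set.mem_singleton_iff.mp hb]
  have hproper : ∀ v : ι, ({v} : Set ι) ≠ Set.univ := by
    intro v h
    have := Set.ncard_univ ι ▸ h ▸ Set.ncard_singleton v
    rw [Nat.card_eq_fintype_card] at this
    omega
  rcases reach_top hsemi hstrong hcard (({v0} : Set ι)ᶜ).ncard {v0} le_rfl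
      (hsingle_strong v0) ⟨v0, rfl⟩ (hproper v0) with h | ⟨y1, _, h1⟩
  · exact h
  rcases reach_top hsemi hstrong hcard (({y1} : Set ι)ᶜ).ncard {y1} le_rfl
      (hsingle_strong y1) ⟨y1, rfl⟩ (hproper y1) with h | ⟨y2, hy2, h2⟩
  · exact h
  exact ⟨y1, y2, fun h => hy2 (h ▸ rfl), h1, h2⟩

end Comb


section MatrixPart

variable {ι : Type*}

def Arc (A : Matrix ι ι ℝ) (w : ι → ℝ) : ι → ι → Prop :=
  fun i j => w i / w j ≤ A i j

lemma semi_arc {A : Matrix ι ι ℝ} {w : ι → ℝ} (hA : IsReciprocal A) (hw : PosVec w) :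
    Semi (Arc A w) := by
  intro a b
  by_cases h : w a / w b ≤ A a b
  · exact Or.inl h
  · right
    push_neg at h
    have hpos : 0 < A a b := hA.1 a b
    have h1 : 1 / (w a / w b) ≤ 1 / A a b := one_div_le_one_div_of_le hpos h.le
    rw [one_div_div] at h1
    rw [Arc, hA.2 a b]
    exact h1

lemma strong_imp_efficient [Fintype ι] {A : Matrix ι ι ℝ} {w : ι → ℝ}
    (hA : IsReciprocal A) (hw : PosVec w)
    (h : ∀ a b, Relation.ReflTransGen (Arc A w) a b) : IsEfficient A w := by
  refine ⟨hw, fun v hv hdom => ?_⟩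
  have key : ∀ i j, Arc A w i j → v j / w j ≤ v i / w i := by
    intro i j harc
    have h1 : |A i j - w i / w j| = A i j - w i / w j := abs_of_nonneg (by
      have := harc; simp only [Arc] at this; linarith)
    have h2 := hdom i j
    rw [h1] at h2
    have h3 : A i j - v i / v j ≤ A i j - w i / w j :=
      le_trans (le_abs_self _) h2
    have h4 : w i / w j ≤ v i / v j := by linarith
    rw [div_le_div_iff₀ (hw j) (hv j)] at h4
    rw [div_le_div_iff₀ (hw j) (hw i)]
    linarith
  have keyR : ∀ i j, Relation.ReflTransGen (Arc A w) i j → v j / w j ≤ v i / w i := by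
    intro i j hij
    induction hij with
    | refl => exact le_rfl
    | tail h1 h2 ih => exact le_trans (key _ _ h2) ih
  cases isEmpty_or_nonempty ι with
  | inl hempty =>
    exact ⟨1, one_pos, funext fun i => (hempty.false i).elim⟩
  | inr hne =>
    obtain ⟨i0⟩ := hne
    refine ⟨v i0 / w i0, div_pos (hv i0) (hw i0), funext fun i => ?_⟩
    have heq : v i / w i = v i0 / w i0 :=
      le_antisymm (keyR i0 i (h i0 i)) (keyR i i0 (h i i0))
    have : v i = (v i0 / w i0) * w i := by
      rw [← heq, div_mul_cancel₀ _ (ne_of_gt (hw i))]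
    simpa using this

lemma efficient_imp_strong [Fintype ι] {A : Matrix ι ι ℝ} {w : ι → ℝ}
    (hA : IsReciprocal A) (hw : PosVec w) (heff : IsEfficient A w) :
    ∀ a b, Relation.ReflTransGen (Arc A w) a b := by
  classical
  by_contra hcon
  push_neg at hcon
  obtain ⟨a0, b0, hab⟩ := hcon
  set S : Set ι := {i | Relation.ReflTransGen (Arc A w) a0 i} with hSdef
  have ha0 : a0 ∈ S := Relation.ReflTransGen.refl
  have hb0 : b0 ∉ S := hab
  have hcut : ∀ i ∈ S, ∀ j, j ∉ S → A i j < w i / w j := by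
    intro i hi j hj
    by_contra h
    push_neg at h
    exact hj (Relation.ReflTransGen.tail hi h)
  set P : Finset (ι × ι) := Finset.univ.filter (fun p => p.1 ∈ S ∧ p.2 ∉ S) with hPdef
  have hPmem : (a0, b0) ∈ P := by
    simp [hPdef, ha0, hb0]
  have hPne : P.Nonempty := ⟨_, hPmem⟩
  set f : ι × ι → ℝ := fun p => A p.1 p.2 * w p.2 / w p.1 with hfdef
  set s : ℝ := P.sup' hPne f with hsdef
  have hspos : 0 < s := by
    have h1 : 0 < f (a0, b0) :=
      div_pos (mul_pos (hA.1 a0 b0) (hw b0)) (hw a0)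
    exact lt_of_lt_of_le h1 (Finset.le_sup' f hPmem)
  have hslt : s < 1 := by
    rw [hsdef, Finset.sup'_lt_iff]
    intro p hp
    rw [hPdef, Finset.mem_filter] at hp
    have hcutp := hcut p.1 hp.2.1 p.2 hp.2.2
    rw [hfdef]
    rw [div_lt_one (hw p.1)]
    rw [lt_div_iff₀ (hw p.2)] at hcutp
    linarith
  have hs_le : ∀ i ∈ S, ∀ j, j ∉ S → A i j * w j / w i ≤ s := by
    intro i hi j hj
    exact Finset.le_sup' f (by simp [hPdef, hi, hj] : (i, j) ∈ P)
  set v : ι → ℝ := fun i => if i ∈ S then s * w i else w i with hvdef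
  have hvpos : PosVec v := by
    intro i
    rw [hvdef]
    by_cases h : i ∈ S <;> simp [h, hw i, mul_pos hspos (hw i)]
  have hdom : ∀ i j, |A i j - v i / v j| ≤ |A i j - w i / w j| := by
    intro i j
    by_cases hi : i ∈ S <;> by_cases hj : j ∈ S
    · have : v i / v j = w i / w j := by
        simp only [hvdef, if_pos hi, if_pos hj]
        rw [mul_div_mul_left _ _ (ne_of_gt hspos)]
      rw [this]
    · -- i ∈ S, j ∉ S : A i j < w i / w j, and A i j ≤ s * w i / w j ≤ w i / w j
      have hvv : v i / v j = s * (w i / w j) := by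
        simp only [hvdef, if_pos hi, if_neg hj]
        ring
      have h1 : A i j ≤ s * (w i / w j) := by
        have h2 := hs_le i hi j hj
        rw [div_le_iff₀ (hw i)] at h2
        rw [← mul_div_assoc, le_div_iff₀ (hw j)]
        linarith
      have h2 : s * (w i / w j) ≤ w i / w j := by
        nlinarith [div_pos (hw i) (hw j)]
      have hcutij := hcut i hi j hj
      rw [hvv, abs_of_nonpos (by linarith), abs_of_nonpos (by linarith)]
      linarith
    · -- i ∉ S, j ∈ S : A i j > w i / w j, and w i/w j ≤ v i/v j ≤ A i j
      have hvv : v i / v j = (w i / w j) / s := by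
        simp only [hvdef, if_neg hi, if_pos hj]
        rw [div_div, mul_comm s (w j)]
      have haij : w i / w j < A i j := by
        have hcutji := hcut j hj i hi
        have h1 : 1 / (w j / w i) < 1 / A j i :=
          one_div_lt_one_div_of_lt (hA.1 j i) hcutji
        rw [one_div_div] at h1
        rw [← hA.2 j i] at h1
        exact h1
      have h1 : (w i / w j) / s ≤ A i j := by
        have h2 := hs_le j hj i hi
        rw [hA.2 j i, div_le_div_iff₀ hspos (hA.1 j i), one_mul]
        have h3 : w i / w j * A j i = A j i * w i / w j := by ring
        linarith
      have h2 : w i / w j ≤ (w i / w j) / s := by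
        rw [le_div_iff₀ hspos]
        nlinarith [div_pos (hw i) (hw j)]
      rw [hvv, abs_of_nonneg (by linarith), abs_of_nonneg (by linarith)]
      linarith
    · have : v i / v j = w i / w j := by
        simp only [hvdef, if_neg hi, if_neg hj]
      rw [this]
  obtain ⟨c, hc, hveq⟩ := heff.2 v hvpos hdom
  have hb0eq : v b0 = c * w b0 := by rw [hveq]; rfl
  have ha0eq : v a0 = c * w a0 := by rw [hveq]; rfl
  rw [hvdef] at hb0eq ha0eq
  simp only [if_neg hb0] at hb0eq
  simp only [if_pos ha0] at ha0eq
  have hc1 : c = 1 := by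
    have := hw b0
    field_simp at hb0eq
    nlinarith
  have hcs : c = s := by
    have := hw a0
    nlinarith
  rw [hc1] at hcs
  linarith

end MatrixPart


lemma rtg_to_subtype {ι : Type*} {r : ι → ι → Prop} {p : ι → Prop} {a b : ι} (ha : p a)
    (h : Relation.ReflTransGen (fun x y => p x ∧ p y ∧ r x y) a b) :
    ∀ hb : p b, Relation.ReflTransGen (fun x y : {z // p z} => r x.1 y.1) ⟨a, ha⟩ ⟨b, hb⟩ := by
  induction h with
  | refl => intro hb; exact Relation.ReflTransGen.refl
  | tail h1 h2 ih =>
    intro hc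
    exact Relation.ReflTransGen.tail (ih h2.1) h2.2.2


/-- if `n ≥ 4` and `w` is efficient for the reciprocal matrix `A`, then there
are two distinct indices `i`, `j` with `w ∈ E(A; i) ∩ E(A; j)`. -/
theorem exists_two_efficient_deletions {n : ℕ} (hn : 4 ≤ n) (A : Matrix (Fin n) (Fin n) ℝ)
    (hA : IsReciprocal A) (w : Fin n → ℝ) (hw : IsEfficient A w) :
    ∃ i j : Fin n, i ≠ j ∧ w ∈ EsetSub A i ∧ w ∈ EsetSub A j := by
  have hwpos : PosVec w := hw.1
  have hsemi : Semi (Arc A w) := semi_arc hA hwpos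
  have hstrongRTG := efficient_imp_strong hA hwpos hw
  have hstrongU : StrongIn Set.univ (Arc A w) := fun a _ b _ =>
    Relation.ReflTransGen.mono (r := Arc A w) (p := rIn Set.univ (Arc A w))
      (by intro x y h; exact ⟨trivial, trivial, h⟩) a b (hstrongRTG a b)
  have hcard : 4 ≤ Fintype.card (Fin n) := by simpa using hn
  obtain ⟨i, j, hij, hi, hj⟩ := two_omittable hsemi hstrongU hcard
  have key : ∀ k : Fin n, StrongIn ({k}ᶜ) (Arc A w) →
      IsEfficient (delMat A k) (delVec w k) := by
    intro k hk
    have hArec : IsReciprocal (delMat A k) :=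
      ⟨fun a b => hA.1 a.1 b.1, fun a b => hA.2 a.1 b.1⟩
    have hwpos' : PosVec (delVec w k) := fun a => hwpos a.1
    refine strong_imp_efficient hArec hwpos' ?_
    intro a b
    have hmem : ∀ z : {i : Fin n // i ≠ k}, z.1 ∈ ({k}ᶜ : Set (Fin n)) := fun z => z.2
    have h1 : Relation.ReflTransGen (rIn ({k}ᶜ) (Arc A w)) a.1 b.1 :=
      hk a.1 (hmem a) b.1 (hmem b)
    have h2 := rtg_to_subtype (p := fun z => z ∈ ({k}ᶜ : Set (Fin n))) (hmem a) h1 (hmem b)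
    have h3 : Relation.ReflTransGen
        (fun x y : {z : Fin n // z ≠ k} => Arc A w x.1 y.1) a b := h2
    exact h3
  exact ⟨i, j, hij, ⟨hw, key i hi⟩, ⟨hw, key j hj⟩⟩
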